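/- If there exist a (3,λ)-LGDD of type g^u and integers such that g(u−2) ≡ 0 (mod λ), then for any positive integer m there exists a (3,λ)-LGDD of type (gm)^u. -/

import Mathlib

open Finset
open scoped Classical


/-- `Gr` is a partition of the point set `X` into `u` groups, each of size `g`. -/
def IsGroupPartition {X : Type} (g u : ℕ) (Gr : Fin u → Finset X) : Prop :=
  (∀ i, (Gr i).card = g) ∧ (∀ x : X, ∃! i, x ∈ Gr i)

/-- `B` is the block multiset of a `(3,lam)`-GDD with group partition `Gr`:
every block is a 3-subset meeting each group in at most one point, and every
pair of points from distinct groups lies in exactly `lam` blocks. -/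
def IsGDDBlocks {X : Type} {u : ℕ} (lam : ℕ) (Gr : Fin u → Finset X)
    (B : Multiset (Finset X)) : Prop :=
  (∀ b ∈ B, b.card = 3 ∧ ∀ i, (b ∩ Gr i).card ≤ 1) ∧
  (∀ x y : X, x ≠ y → (∀ i, ¬(x ∈ Gr i ∧ y ∈ Gr i)) →
    (B.filter (fun b => x ∈ b ∧ y ∈ b)).card = lam)

/-- There exists a simple `(3,lam)`-GDD of type `g^u`
(simplicity: the blocks form a `Finset`, i.e. no repeated blocks). -/
def SimpleGDDExists (g u lam : ℕ) : Prop :=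
  ∃ (X : Type) (Gr : Fin u → Finset X) (B : Finset (Finset X)),
    IsGroupPartition g u Gr ∧ IsGDDBlocks lam Gr B.val

/-- There exists a `(3,lam)`-LGDD of type `g^u`: a (nonempty) collection of
`g*(u-2)/lam` pairwise disjoint simple `(3,lam)`-GDDs of type `g^u` on a common
point set and group set. -/
def LGDDExists (g u lam : ℕ) : Prop :=
  ∃ (X : Type) (Gr : Fin u → Finset X) (N : ℕ) (Bs : Fin N → Finset (Finset X)),
    0 < N ∧ N * lam = g * (u - 2) ∧ IsGroupPartition g u Gr ∧
    (∀ r, IsGDDBlocks lam Gr (Bs r).val) ∧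
    (∀ r s, r ≠ s → Disjoint (Bs r) (Bs s))


section Aux

variable {X : Type} {m : ℕ} [NeZero m]

noncomputable def infl (b : Finset X) (t : ↥b → ZMod m) : Finset (X × ZMod m) :=
  b.attach.image (fun x => (x.1, t x))

omit [NeZero m] in
lemma mem_infl {b : Finset X} {t : ↥b → ZMod m} {x : X} {a : ZMod m} :
    (x, a) ∈ infl b t ↔ ∃ hx : x ∈ b, t ⟨x, hx⟩ = a := by
  simp only [infl, mem_image, mem_attach, true_and]
  constructor
  · rintro ⟨⟨w, hw⟩, h⟩
    rw [Prod.mk.injEq] at h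
    obtain ⟨rfl, rfl⟩ := h
    exact ⟨hw, rfl⟩
  · rintro ⟨hx, rfl⟩
    exact ⟨⟨x, hx⟩, rfl⟩

omit [NeZero m] in
lemma image_fst_infl (b : Finset X) (t : ↥b → ZMod m) :
    (infl b t).image Prod.fst = b := by
  rw [infl, image_image]
  exact b.attach_image_val

omit [NeZero m] in
lemma card_infl (b : Finset X) (t : ↥b → ZMod m) : (infl b t).card = b.card := by
  have hinj : Function.Injective (fun x : ↥b => (x.1, t x)) := by
    intro x y h
    exact Subtype.ext (congrArg Prod.fst h)
  rw [infl, Finset.card_image_of_injective _ hinj, card_attach]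

omit [NeZero m] in
lemma infl_right_inj {b : Finset X} {t t' : ↥b → ZMod m} (h : infl b t = infl b t') :
    t = t' := by
  funext w
  have hm : ((w : X), t w) ∈ infl b t' := by
    rw [← h, infl]
    exact mem_image_of_mem _ (mem_attach _ _)
  rw [mem_infl] at hm
  obtain ⟨hx, hv⟩ := hm
  rw [Subtype.coe_eta] at hv
  exact hv.symm

omit [NeZero m] in
lemma exists_third {b : Finset X} {x y : X} (hx : x ∈ b) (hy : y ∈ b) (hxy : x ≠ y)
    (h3 : b.card = 3) : ∃ z, z ≠ x ∧ z ≠ y ∧ b = {x, y, z} := by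
  have hy' : y ∈ b.erase x := mem_erase.2 ⟨hxy.symm, hy⟩
  have h1 : ((b.erase x).erase y).card = 1 := by
    rw [card_erase_of_mem hy', card_erase_of_mem hx, h3]
  obtain ⟨z, hz⟩ := card_eq_one.1 h1
  have hz' : z ∈ (b.erase x).erase y := hz ▸ mem_singleton_self z
  obtain ⟨hzy, hz2⟩ := mem_erase.1 hz'
  obtain ⟨hzx, hzb⟩ := mem_erase.1 hz2
  refine ⟨z, hzx, hzy, ?_⟩
  rw [show ({x, y, z} : Finset X) = insert x (insert y {z}) from rfl, ← hz,
    insert_erase hy', insert_erase hx]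

lemma sum_subtype_eq {b : Finset X} (t : ↥b → ZMod m) :
    ∑ w : ↥b, t w = ∑ w ∈ b, (if h : w ∈ b then t ⟨w, h⟩ else 0) := by
  rw [univ_eq_attach, ← Finset.sum_attach b (fun w => if h : w ∈ b then t ⟨w, h⟩ else 0)]
  refine sum_congr rfl fun w _ => ?_
  rw [dif_pos w.2]

/-- Sum of a function over a three-element block `{x,y,z}`. -/
lemma sum_three {x y z : X} (hzx : z ≠ x) (hzy : z ≠ y) (hxy : x ≠ y)
    (F : X → ZMod m) :
    ∑ w ∈ ({x, y, z} : Finset X), F w = F x + F y + F z := by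
  rw [show ({x, y, z} : Finset X) = insert x (insert y {z}) from rfl]
  rw [sum_insert (by simp [hxy, hzx.symm]), sum_insert (by simp [hzy.symm]), sum_singleton,
    add_assoc]

/-- The inflated family of blocks, with total-weight parameter `c`. -/
noncomputable def inflFam (Bs : Finset (Finset X)) (c : ZMod m) :
    Finset (Finset (X × ZMod m)) :=
  (Bs.sigma (fun b => (Finset.univ : Finset (↥b → ZMod m)).filter
      (fun t => ∑ w : ↥b, t w = c))).image (fun p => infl p.1 p.2)

lemma mem_inflFam {Bs : Finset (Finset X)} {c : ZMod m} {B : Finset (X × ZMod m)} :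
    B ∈ inflFam Bs c ↔
      ∃ b ∈ Bs, ∃ t : ↥b → ZMod m, (∑ w : ↥b, t w = c) ∧ B = infl b t := by
  simp only [inflFam, Finset.mem_image, Finset.mem_sigma, Finset.mem_filter,
    Finset.mem_univ, true_and, Sigma.exists]
  constructor
  · rintro ⟨b, t, ⟨hb, hs⟩, rfl⟩
    exact ⟨b, hb, t, hs, rfl⟩
  · rintro ⟨b, hb, t, hs, rfl⟩
    exact ⟨b, t, ⟨hb, hs⟩, rfl⟩


lemma sum_subtype_three {b : Finset X} (t : ↥b → ZMod m) {x y z : X}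
    (hx : x ∈ b) (hy : y ∈ b) (hz : z ∈ b) (hzx : z ≠ x) (hzy : z ≠ y) (hxy : x ≠ y)
    (hbeq : b = {x, y, z}) :
    ∑ w : ↥b, t w = t ⟨x, hx⟩ + t ⟨y, hy⟩ + t ⟨z, hz⟩ := by
  rw [sum_subtype_eq]
  nth_rewrite 1 [hbeq]
  rw [sum_three hzx hzy hxy, dif_pos hx, dif_pos hy, dif_pos hz]

lemma count_pairs {Bs : Finset (Finset X)} (h3 : ∀ b ∈ Bs, b.card = 3)
    {x y : X} (hxy : x ≠ y) (a e c : ZMod m) :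
    ((inflFam Bs c).filter (fun B => (x, a) ∈ B ∧ (y, e) ∈ B)).card
      = (Bs.filter (fun b => x ∈ b ∧ y ∈ b)).card := by
  refine Finset.card_nbij' (fun B => B.image Prod.fst)
    (fun b => infl b (fun w => if (w : X) = x then a else if (w : X) = y then e
      else c - a - e)) ?_ ?_ ?_ ?_
  · intro B hB
    rw [mem_coe, mem_filter] at hB
    obtain ⟨hBm, hp, hq⟩ := hB
    obtain ⟨b, hb, t, hs, rfl⟩ := mem_inflFam.1 hBm
    obtain ⟨hxb, -⟩ := mem_infl.1 hp
    obtain ⟨hyb, -⟩ := mem_infl.1 hq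
    rw [mem_coe, mem_filter]
    simp only [image_fst_infl]
    exact ⟨hb, hxb, hyb⟩
  · intro b hb
    rw [mem_coe, mem_filter] at hb
    obtain ⟨hbB, hxb, hyb⟩ := hb
    obtain ⟨z, hzx, hzy, hbeq⟩ := exists_third hxb hyb hxy (h3 b hbB)
    have hzb : z ∈ b := by rw [hbeq]; simp
    have hsum : ∑ w : ↥b, (fun w : ↥b => if (w : X) = x then a else if (w : X) = y then e
        else c - a - e) w = c := by
      rw [sum_subtype_three _ hxb hyb hzb hzx hzy hxy hbeq]
      simp only [if_pos rfl, if_neg (Ne.symm hxy), if_neg hzx, if_neg hzy, if_true]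
      ring
    rw [mem_coe, mem_filter]
    refine ⟨mem_inflFam.2 ⟨b, hbB, _, hsum, rfl⟩, ?_, ?_⟩
    · exact mem_infl.2 ⟨hxb, by simp⟩
    · exact mem_infl.2 ⟨hyb, by simp [Ne.symm hxy]⟩
  · intro B hB
    rw [mem_coe, mem_filter] at hB
    obtain ⟨hBm, hp, hq⟩ := hB
    obtain ⟨b, hb, t, hs, rfl⟩ := mem_inflFam.1 hBm
    obtain ⟨hxb, hta⟩ := mem_infl.1 hp
    obtain ⟨hyb, hte⟩ := mem_infl.1 hq
    beta_reduce
    rw [image_fst_infl]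
    obtain ⟨z, hzx, hzy, hbeq⟩ := exists_third hxb hyb hxy (h3 b hb)
    have hzb : z ∈ b := by rw [hbeq]; simp
    rw [sum_subtype_three t hxb hyb hzb hzx hzy hxy hbeq] at hs
    have htz : t ⟨z, hzb⟩ = c - a - e := by rw [← hs, hta, hte]; ring
    congr 1
    funext w
    have hwb : (w : X) ∈ ({x, y, z} : Finset X) := by rw [← hbeq]; exact w.2
    rw [mem_insert, mem_insert, mem_singleton] at hwb
    rcases hwb with hw | hw | hw
    · have hww : w = ⟨x, hxb⟩ := Subtype.ext hw
      rw [hww]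
      simp [hta]
    · have hww : w = ⟨y, hyb⟩ := Subtype.ext hw
      rw [hww]
      simp [Ne.symm hxy, hte]
    · have hww : w = ⟨z, hzb⟩ := Subtype.ext hw
      rw [hww]
      simp [hzx, hzy, htz]
  · intro b hb
    exact image_fst_infl _ _

lemma count_pairs_val {Bs : Finset (Finset X)} (h3 : ∀ b ∈ Bs, b.card = 3)
    {x y : X} (hxy : x ≠ y) (a e c : ZMod m) :
    (Multiset.filter (fun B => (x, a) ∈ B ∧ (y, e) ∈ B) (inflFam Bs c).val).card
      = (Multiset.filter (fun b => x ∈ b ∧ y ∈ b) Bs.val).card := by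
  rw [← Finset.filter_val, ← Finset.filter_val]
  exact count_pairs h3 hxy a e c

lemma inflFam_disjoint_of_disjoint {Bs Bs' : Finset (Finset X)} (h : Disjoint Bs Bs')
    (c c' : ZMod m) : Disjoint (inflFam Bs c) (inflFam Bs' c') := by
  rw [Finset.disjoint_left]
  intro B hB hB'
  obtain ⟨b, hb, t, hs, rfl⟩ := mem_inflFam.1 hB
  obtain ⟨b', hb', t', hs', heq⟩ := mem_inflFam.1 hB'
  have hbb : b = b' := by rw [← image_fst_infl b t, heq, image_fst_infl]
  exact Finset.disjoint_left.1 h hb (hbb ▸ hb')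

lemma inflFam_disjoint_of_ne {Bs : Finset (Finset X)} {c c' : ZMod m} (h : c ≠ c') :
    Disjoint (inflFam Bs c) (inflFam Bs c') := by
  rw [Finset.disjoint_left]
  intro B hB hB'
  obtain ⟨b, hb, t, hs, rfl⟩ := mem_inflFam.1 hB
  obtain ⟨b', hb', t', hs', heq⟩ := mem_inflFam.1 hB'
  have hbb : b = b' := by rw [← image_fst_infl b t, heq, image_fst_infl]
  subst hbb
  have htt := infl_right_inj heq
  subst htt
  exact h (hs.symm.trans hs')

end Aux

theorem LGDD_inflate (g u lam : ℕ) (h : LGDDExists g u lam)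
    (hdvd : lam ∣ g * (u - 2)) :
    ∀ m : ℕ, 0 < m → LGDDExists (g * m) u lam := by
  intro m hm
  haveI : NeZero m := ⟨hm.ne'⟩
  obtain ⟨X, Gr, N, Bs, hN, hNlam, ⟨hcard, hpart⟩, hGDD, hdisj⟩ := h
  refine ⟨X × ZMod m, fun i => (Gr i) ×ˢ (Finset.univ : Finset (ZMod m)), N * m,
    fun r' => inflFam (Bs ((finProdFinEquiv (m := N) (n := m)).symm r').1)
      (((((finProdFinEquiv (m := N) (n := m)).symm r').2 : Fin m) : ℕ) : ZMod m),
    Nat.mul_pos hN hm, ?_, ⟨?_, ?_⟩, ?_, ?_⟩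
  · -- counting equation
    rw [mul_comm N m, mul_assoc, hNlam]
    ring
  · -- group sizes
    intro i
    rw [Finset.card_product, hcard i, Finset.card_univ, ZMod.card]
  · -- partition
    intro p
    obtain ⟨x, a⟩ := p
    obtain ⟨i, hi, hun⟩ := hpart x
    refine ⟨i, by simp [Finset.mem_product, hi], fun j hj => ?_⟩
    simp only [Finset.mem_product] at hj
    exact hun j hj.1
  · -- each member is a GDD
    intro r'
    beta_reduce
    set r := ((finProdFinEquiv (m := N) (n := m)).symm r').1 with hr
    set c := (((((finProdFinEquiv (m := N) (n := m)).symm r').2 : Fin m) : ℕ) : ZMod m)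
      with hc
    obtain ⟨hB3, hBpair⟩ := hGDD r
    have h3 : ∀ b ∈ Bs r, b.card = 3 := fun b hb => (hB3 b hb).1
    constructor
    · -- block shape
      intro B hB
      rw [Finset.mem_val] at hB
      obtain ⟨b, hb, t, hs, rfl⟩ := mem_inflFam.1 hB
      refine ⟨by rw [card_infl]; exact h3 b hb, ?_⟩
      intro i
      rw [Finset.card_le_one]
      rintro ⟨x1, a1⟩ hp ⟨y1, b1⟩ hq
      simp only [Finset.mem_inter, Finset.mem_product] at hp hq
      obtain ⟨hp1, hp2, -⟩ := hp
      obtain ⟨hq1, hq2, -⟩ := hq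
      obtain ⟨hx1, ht1⟩ := mem_infl.1 hp1
      obtain ⟨hy1, ht2⟩ := mem_infl.1 hq1
      have hle := (hB3 b hb).2 i
      rw [Finset.card_le_one] at hle
      have hxy1 : x1 = y1 :=
        hle x1 (Finset.mem_inter.2 ⟨hx1, hp2⟩) y1 (Finset.mem_inter.2 ⟨hy1, hq2⟩)
      subst hxy1
      have : a1 = b1 := by rw [← ht1, ← ht2]
      rw [this]
    · -- pair counts
      rintro ⟨x, a⟩ ⟨y, e⟩ hne hng
      have hng' : ∀ i, ¬(x ∈ Gr i ∧ y ∈ Gr i) := by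
        intro i hi
        exact hng i ⟨Finset.mem_product.2 ⟨hi.1, Finset.mem_univ _⟩,
          Finset.mem_product.2 ⟨hi.2, Finset.mem_univ _⟩⟩
      have hxy : x ≠ y := by
        rintro rfl
        obtain ⟨i, hi, -⟩ := hpart x
        exact hng' i ⟨hi, hi⟩
      have horig := hBpair x y hxy hng'
      have hfin := (count_pairs_val h3 hxy a e c).trans horig
      convert hfin using 3
  · -- disjointness
    intro r' s' hne
    beta_reduce
    set er := (finProdFinEquiv (m := N) (n := m)).symm r' with her
    set es := (finProdFinEquiv (m := N) (n := m)).symm s' with hes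
    by_cases h1 : er.1 = es.1
    · have h2 : er.2 ≠ es.2 := by
        intro h2
        exact hne ((finProdFinEquiv (m := N) (n := m)).symm.injective (Prod.ext h1 h2))
      rw [h1]
      apply inflFam_disjoint_of_ne
      intro hcc
      apply h2
      have := congrArg ZMod.val hcc
      rw [ZMod.val_cast_of_lt er.2.isLt, ZMod.val_cast_of_lt es.2.isLt] at this
      exact Fin.ext this
    · exact inflFam_disjoint_of_disjoint (hdisj _ _ h1) _ _
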